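/- (Classical API error bound.) In a finite MDP with discount γ ∈ (0,1), if a sequence of policies (π^t) and value estimates (V^t) satisfies ‖V^t − V^{π^t}‖_∞ ≤ δ and ‖T^{π^{t+1}} V^t − T V^t‖_∞ ≤ ε for all t, then limsup_{t→∞} ‖V^{π^t} − V*‖_∞ ≤ (ε + 2γδ)/(1−γ)², where V* is the optimal value function (the fixed point of the Bellman optimality operator T). -/
import Mathlib


open Finset Filter

variable {S A : Type*}

/-- A stochastic policy: for each state, a probability distribution over actions. -/
def IsPolicy [Fintype A] (pi : S → A → ℝ) : Prop :=
  (∀ s a, 0 ≤ pi s a) ∧ ∀ s, ∑ a, pi s a = 1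

/-- A transition kernel: for each state-action pair, a probability distribution over states. -/
def IsKernel [Fintype S] (P : S → A → S → ℝ) : Prop :=
  (∀ s a s', 0 ≤ P s a s') ∧ ∀ s a, ∑ s', P s a s' = 1

/-- The policy Bellman operator `T^π` for kernel `P`. -/
def Tpol [Fintype S] [Fintype A] (γ : ℝ) (R : S → A → ℝ) (P : S → A → S → ℝ)
    (pi : S → A → ℝ) (V : S → ℝ) (s : S) : ℝ :=
  ∑ a, pi s a * (R s a + γ * ∑ s', P s a s' * V s')

/-- The Bellman optimality operator `T` for kernel `P`. -/
noncomputable def Topt [Fintype S] [Fintype A] [Nonempty A] (γ : ℝ) (R : S → A → ℝ)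
    (P : S → A → S → ℝ) (V : S → ℝ) (s : S) : ℝ :=
  Finset.univ.sup' Finset.univ_nonempty fun a => R s a + γ * ∑ s', P s a s' * V s'

/-- Heterogeneity measure `κ_{m,n}`: the supremum over policies `π` and states `s` of the
ℓ¹-distance between the induced state transition kernels `P_m^π(·|s)` and `P_n^π(·|s)`. -/
noncomputable def kappa [Fintype S] [Fintype A] (Pm Pn : S → A → S → ℝ) : ℝ :=
  sSup {x : ℝ | ∃ pi : S → A → ℝ, ∃ s : S, IsPolicy pi ∧
    x = ∑ s', |(∑ a, pi s a * Pm s a s') - ∑ a, pi s a * Pn s a s'|}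

/-- Sup-norm of a value function on a finite state space. -/
noncomputable def supNorm [Fintype S] [Nonempty S] (V : S → ℝ) : ℝ := ⨆ s, |V s|

variable [Fintype S] [Fintype A] [Nonempty S] [Nonempty A]

section helpers

/-- Weighted averages are bounded above by an upper bound of the values. -/
lemma sum_weighted_le {ι : Type*} [Fintype ι] (w q : ι → ℝ) (C : ℝ)
    (hw : ∀ i, 0 ≤ w i) (hs : ∑ i, w i = 1) (hq : ∀ i, q i ≤ C) :
    ∑ i, w i * q i ≤ C := by
  calc ∑ i, w i * q i ≤ ∑ i, w i * C :=
        Finset.sum_le_sum fun i _ => mul_le_mul_of_nonneg_left (hq i) (hw i)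
    _ = C := by rw [← Finset.sum_mul, hs, one_mul]

lemma sum_weighted_ge {ι : Type*} [Fintype ι] (w q : ι → ℝ) (C : ℝ)
    (hw : ∀ i, 0 ≤ w i) (hs : ∑ i, w i = 1) (hq : ∀ i, C ≤ q i) :
    C ≤ ∑ i, w i * q i := by
  calc C = ∑ i, w i * C := by rw [← Finset.sum_mul, hs, one_mul]
    _ ≤ ∑ i, w i * q i :=
        Finset.sum_le_sum fun i _ => mul_le_mul_of_nonneg_left (hq i) (hw i)

lemma abs_le_supNorm (V : S → ℝ) (s : S) : |V s| ≤ supNorm V := by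
  rw [supNorm]
  exact le_ciSup (Set.Finite.bddAbove (Set.finite_range fun s => |V s|)) s

lemma supNorm_le {V : S → ℝ} {c : ℝ} (h : ∀ s, |V s| ≤ c) : supNorm V ≤ c :=
  ciSup_le h

lemma supNorm_nonneg (V : S → ℝ) : 0 ≤ supNorm V := by
  obtain ⟨s⟩ := (inferInstance : Nonempty S)
  exact le_trans (abs_nonneg (V s)) (abs_le_supNorm V s)

lemma Tpol_sub (γ : ℝ) (R : S → A → ℝ) (P : S → A → S → ℝ) (pi : S → A → ℝ)
    (V W : S → ℝ) (s : S) :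
    Tpol γ R P pi V s - Tpol γ R P pi W s
      = γ * ∑ a, pi s a * ∑ s', P s a s' * (V s' - W s') := by
  simp only [Tpol]
  rw [← Finset.sum_sub_distrib, Finset.mul_sum]
  apply Finset.sum_congr rfl
  intro a _
  have h : ∑ s', P s a s' * (V s' - W s')
      = (∑ s', P s a s' * V s') - ∑ s', P s a s' * W s' := by
    rw [← Finset.sum_sub_distrib]
    exact Finset.sum_congr rfl fun _ _ => by ring
  rw [h]; ring

/-- A policy average of action-values is at most the optimality operator value. -/
lemma Tpol_le_Topt (γ : ℝ) (R : S → A → ℝ) (P : S → A → S → ℝ) {pi : S → A → ℝ}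
    (hpi : IsPolicy pi) (V : S → ℝ) (s : S) :
    Tpol γ R P pi V s ≤ Topt γ R P V s :=
  sum_weighted_le _ _ _ (hpi.1 s) (hpi.2 s)
    (fun a => Finset.le_sup' (fun a => R s a + γ * ∑ s', P s a s' * V s') (mem_univ a))

/-- The optimality operator is a `γ`-contraction (one-sided form). -/
lemma Topt_sub_le (γ : ℝ) (hγ0 : 0 ≤ γ) (R : S → A → ℝ) (P : S → A → S → ℝ)
    (hP : IsKernel P) (V W : S → ℝ) (s : S) :
    Topt γ R P V s - Topt γ R P W s ≤ γ * supNorm (fun x => V x - W x) := by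
  rw [sub_le_iff_le_add]
  apply Finset.sup'_le
  intro a _
  have h1 : ∑ s', P s a s' * V s' - ∑ s', P s a s' * W s'
      = ∑ s', P s a s' * (V s' - W s') := by
    rw [← Finset.sum_sub_distrib]; exact Finset.sum_congr rfl fun _ _ => by ring
  have h2 : ∑ s', P s a s' * (V s' - W s') ≤ supNorm (fun x => V x - W x) :=
    sum_weighted_le _ _ _ (hP.1 s a) (hP.2 s a)
      (fun s' => le_trans (le_abs_self _) (abs_le_supNorm (fun x => V x - W x) s'))
  have h3 : R s a + γ * ∑ s', P s a s' * W s' ≤ Topt γ R P W s :=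
    Finset.le_sup' (fun a => R s a + γ * ∑ s', P s a s' * W s') (mem_univ a)
  have h4 := mul_le_mul_of_nonneg_left h2 hγ0
  nlinarith [h1, h4, h3]

/-- If `U ≥ γ P_π U - c` pointwise then `U ≥ -c/(1-γ)` pointwise. -/
lemma keyLower (γ : ℝ) (hγ0 : 0 ≤ γ) (hγ1 : γ < 1) (P : S → A → S → ℝ) (hP : IsKernel P)
    {pi : S → A → ℝ} (hpi : IsPolicy pi) (U : S → ℝ) (c : ℝ)
    (h : ∀ s, γ * (∑ a, pi s a * ∑ s', P s a s' * U s') - c ≤ U s) :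
    ∀ s, -(c / (1 - γ)) ≤ U s := by
  obtain ⟨s0, _, hs0⟩ := Finset.exists_min_image Finset.univ U Finset.univ_nonempty
  have hmin : ∀ s, U s0 ≤ U s := fun s => hs0 s (mem_univ s)
  have havg : U s0 ≤ ∑ a, pi s0 a * ∑ s', P s0 a s' * U s' :=
    sum_weighted_ge _ _ _ (hpi.1 s0) (hpi.2 s0)
      (fun a => sum_weighted_ge _ _ _ (hP.1 s0 a) (hP.2 s0 a) (fun s' => hmin s'))
  have h1 : γ * U s0 - c ≤ U s0 := by
    have := h s0
    nlinarith [mul_le_mul_of_nonneg_left havg hγ0]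
  intro s
  have hdiv : -(c / (1 - γ)) ≤ U s0 := by
    rw [neg_le, le_div_iff₀ (by linarith : (0:ℝ) < 1 - γ)]
    nlinarith
  exact le_trans hdiv (hmin s)

end helpers

theorem stmt14 (γ Rmax δ ε : ℝ) (hγ0 : 0 < γ) (hγ1 : γ < 1)
    (R : S → A → ℝ) (hR : ∀ s a, 0 ≤ R s a ∧ R s a ≤ Rmax)
    (P : S → A → S → ℝ) (hP : IsKernel P)
    (pit : ℕ → S → A → ℝ) (hpit : ∀ t, IsPolicy (pit t))
    (Vpi : ℕ → S → ℝ) (hVpi : ∀ t s, Vpi t s = Tpol γ R P (pit t) (Vpi t) s)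
    (Vt : ℕ → S → ℝ)
    (hδ : ∀ t, supNorm (fun s => Vt t s - Vpi t s) ≤ δ)
    (hε : ∀ t, supNorm (fun s => Tpol γ R P (pit (t + 1)) (Vt t) s - Topt γ R P (Vt t) s) ≤ ε)
    (Vstar : S → ℝ) (hVstar : ∀ s, Vstar s = Topt γ R P Vstar s) :
    limsup (fun t => supNorm (fun s => Vpi t s - Vstar s)) atTop ≤
      (ε + 2 * γ * δ) / (1 - γ) ^ 2 := by
  have h1γ : (0:ℝ) < 1 - γ := by linarith
  set d : ℝ := ε + 2 * γ * δ with hd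
  set c : ℝ := d / (1 - γ) with hc
  set e : ℕ → ℝ := fun t => supNorm (fun s => Vpi t s - Vstar s) with he
  have hδ0 : 0 ≤ δ := le_trans (supNorm_nonneg _) (hδ 0)
  have hε0 : 0 ≤ ε := le_trans (supNorm_nonneg _) (hε 0)
  have hd0 : 0 ≤ d := by positivity
  have hc0 : 0 ≤ c := by positivity
  -- pointwise versions of hδ, hε
  have hδp : ∀ t s, |Vt t s - Vpi t s| ≤ δ := fun t s =>
    le_trans (abs_le_supNorm (fun s => Vt t s - Vpi t s) s) (hδ t)
  have hεp : ∀ t s, -ε ≤ Tpol γ R P (pit (t+1)) (Vt t) s - Topt γ R P (Vt t) s := fun t s =>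
    (abs_le.1 (le_trans (abs_le_supNorm
      (fun s => Tpol γ R P (pit (t+1)) (Vt t) s - Topt γ R P (Vt t) s) s) (hε t))).1
  -- V* dominates each Vpi t
  have hbnn : ∀ t s, 0 ≤ Vstar s - Vpi t s := by
    intro t
    have := keyLower γ hγ0.le hγ1 P hP (hpit t) (fun s => Vstar s - Vpi t s) 0 ?_
    · intro s; simpa using this s
    · intro s
      have h1 : Tpol γ R P (pit t) Vstar s - Tpol γ R P (pit t) (Vpi t) s
          = γ * ∑ a, pit t s a * ∑ s', P s a s' * (Vstar s' - Vpi t s') :=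
        Tpol_sub γ R P (pit t) Vstar (Vpi t) s
      have h2 : Tpol γ R P (pit t) Vstar s ≤ Topt γ R P Vstar s :=
        Tpol_le_Topt γ R P (hpit t) Vstar s
      have h3 := hVstar s
      have h4 := hVpi t s
      simp only [sub_zero]
      linarith
  -- e t bounds Vstar - Vpi t pointwise
  have hbe : ∀ t s, Vstar s - Vpi t s ≤ e t := by
    intro t s
    have := abs_le_supNorm (fun s => Vpi t s - Vstar s) s
    rw [abs_sub_comm] at this
    exact le_trans (le_abs_self _) this
  have he0 : ∀ t, 0 ≤ e t := fun t => supNorm_nonneg _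
  -- key one-step estimate: Tpol π_{t+1} (Vpi t) ≥ Vpi t - d, and ≥ Topt Vstar - d - γ e t
  have hkey : ∀ t s, Tpol γ R P (pit (t+1)) (Vpi t) s ≥ Topt γ R P (Vt t) s - ε - γ * δ := by
    intro t s
    have h1 : Tpol γ R P (pit (t+1)) (Vpi t) s - Tpol γ R P (pit (t+1)) (Vt t) s
        = γ * ∑ a, pit (t+1) s a * ∑ s', P s a s' * (Vpi t s' - Vt t s') :=
      Tpol_sub γ R P (pit (t+1)) (Vpi t) (Vt t) s
    have h2 : -δ ≤ ∑ a, pit (t+1) s a * ∑ s', P s a s' * (Vpi t s' - Vt t s') :=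
      sum_weighted_ge _ _ _ ((hpit (t+1)).1 s) ((hpit (t+1)).2 s)
        (fun a => sum_weighted_ge _ _ _ (hP.1 s a) (hP.2 s a) (fun s' => by
          have := hδp t s'
          rw [abs_le] at this
          linarith [this.2]))
    have h3 := hεp t s
    nlinarith [mul_le_mul_of_nonneg_left h2 hγ0.le]
  -- approximate policy improvement: Vpi t - Vpi (t+1) ≤ d/(1-γ)
  have himp : ∀ t s, Vpi t s - Vpi (t+1) s ≤ c := by
    intro t
    have hbase : ∀ s, Tpol γ R P (pit (t+1)) (Vpi t) s ≥ Vpi t s - d := by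
      intro s
      have h1 := hkey t s
      have h2 : Topt γ R P (Vt t) s - Topt γ R P (Vpi t) s ≥ -(γ * δ) := by
        have := Topt_sub_le γ hγ0.le R P hP (Vpi t) (Vt t) s
        have hsn : supNorm (fun x => Vpi t x - Vt t x) ≤ δ :=
          supNorm_le (fun x => by rw [abs_sub_comm]; exact hδp t x)
        nlinarith [mul_le_mul_of_nonneg_left hsn hγ0.le]
      have h3 : Tpol γ R P (pit t) (Vpi t) s ≤ Topt γ R P (Vpi t) s :=
        Tpol_le_Topt γ R P (hpit t) (Vpi t) s
      have h4 := hVpi t s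
      simp only [hd]
      linarith
    have := keyLower γ hγ0.le hγ1 P hP (hpit (t+1))
      (fun s => Vpi (t+1) s - Vpi t s) d ?_
    · intro s
      have h5 := this s
      have : -(d / (1 - γ)) ≤ Vpi (t+1) s - Vpi t s := h5
      simp only [hc]
      linarith
    · intro s
      have h1 : Tpol γ R P (pit (t+1)) (Vpi (t+1)) s - Tpol γ R P (pit (t+1)) (Vpi t) s
          = γ * ∑ a, pit (t+1) s a * ∑ s', P s a s' * (Vpi (t+1) s' - Vpi t s') :=
        Tpol_sub γ R P (pit (t+1)) (Vpi (t+1)) (Vpi t) s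
      have h2 := hbase s
      have h3 := hVpi (t+1) s
      show γ * (∑ a, pit (t+1) s a * ∑ s', P s a s' * (Vpi (t+1) s' - Vpi t s')) - d
        ≤ Vpi (t+1) s - Vpi t s
      linarith
  -- main recursion: e (t+1) ≤ γ e t + c
  have hrec : ∀ t, e (t+1) ≤ γ * e t + c := by
    intro t
    apply supNorm_le
    intro s
    rw [abs_sub_comm, abs_of_nonneg (hbnn (t+1) s)]
    -- Vstar s - Vpi (t+1) s = [Topt Vstar s - Tpol π' (Vpi t) s] + γ avg (Vpi t - Vpi (t+1))
    have h1 : Tpol γ R P (pit (t+1)) (Vpi t) s - Tpol γ R P (pit (t+1)) (Vpi (t+1)) s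
        = γ * ∑ a, pit (t+1) s a * ∑ s', P s a s' * (Vpi t s' - Vpi (t+1) s') :=
      Tpol_sub γ R P (pit (t+1)) (Vpi t) (Vpi (t+1)) s
    have h2 : ∑ a, pit (t+1) s a * ∑ s', P s a s' * (Vpi t s' - Vpi (t+1) s') ≤ c :=
      sum_weighted_le _ _ _ ((hpit (t+1)).1 s) ((hpit (t+1)).2 s)
        (fun a => sum_weighted_le _ _ _ (hP.1 s a) (hP.2 s a) (fun s' => himp t s'))
    -- Term 1 bound
    have h3 : Topt γ R P Vstar s - Topt γ R P (Vt t) s ≤ γ * (δ + e t) := by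
      have := Topt_sub_le γ hγ0.le R P hP Vstar (Vt t) s
      have hsn : supNorm (fun x => Vstar x - Vt t x) ≤ δ + e t := by
        apply supNorm_le
        intro x
        have ha : Vstar x - Vt t x = (Vstar x - Vpi t x) + (Vpi t x - Vt t x) := by ring
        calc |Vstar x - Vt t x| ≤ |Vstar x - Vpi t x| + |Vpi t x - Vt t x| := by
              rw [ha]; exact abs_add_le _ _
          _ ≤ e t + δ := by
              gcongr
              · rw [abs_of_nonneg (hbnn t x)]; exact hbe t x
              · rw [abs_sub_comm]; exact hδp t x
          _ = δ + e t := by ring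
      nlinarith [mul_le_mul_of_nonneg_left hsn hγ0.le]
    have h4 := hkey t s
    have h5 := hVpi (t+1) s
    have h6 := hVstar s
    -- combine: Vstar s - Vpi (t+1) s ≤ (d + γ e t) + γ c
    have h7 : Vstar s - Vpi (t+1) s ≤ d + γ * e t + γ * c := by
      have := mul_le_mul_of_nonneg_left h2 hγ0.le
      simp only [hd]
      linarith
    have h8 : d + γ * c = c := by
      simp only [hc]
      field_simp
      ring
    linarith
  -- induction: e n ≤ γ^n * e 0 + c/(1-γ)
  have hind : ∀ n, e n ≤ γ ^ n * e 0 + c / (1 - γ) := by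
    intro n
    induction n with
    | zero => simp; positivity
    | succ n ih =>
      have := hrec n
      have h1 : γ * e n ≤ γ * (γ ^ n * e 0 + c / (1 - γ)) :=
        mul_le_mul_of_nonneg_left ih hγ0.le
      have h2 : γ * (c / (1 - γ)) + c = c / (1 - γ) := by
        field_simp
        ring
      calc e (n+1) ≤ γ * e n + c := this
        _ ≤ γ * (γ ^ n * e 0 + c / (1 - γ)) + c := by linarith
        _ = γ ^ (n+1) * e 0 + (γ * (c / (1 - γ)) + c) := by ring
        _ ≤ γ ^ (n+1) * e 0 + c / (1 - γ) := by rw [h2]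
  -- conclude via limsup
  have hlim' : Tendsto (fun n => γ ^ n * e 0 + c / (1 - γ)) atTop (nhds (c / (1 - γ))) := by
    have h := ((tendsto_pow_atTop_nhds_zero_of_lt_one hγ0.le hγ1).mul_const (e 0)).add_const
      (c / (1 - γ))
    simpa using h
  have hfinal : limsup e atTop ≤ c / (1 - γ) := by
    have h1 : limsup e atTop ≤ limsup (fun n => γ ^ n * e 0 + c / (1 - γ)) atTop :=
      limsup_le_limsup (Eventually.of_forall hind)
        (isCoboundedUnder_le_of_le atTop (x := 0) he0)
        hlim'.isBoundedUnder_le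
    rw [hlim'.limsup_eq] at h1
    exact h1
  have : c / (1 - γ) = d / (1 - γ) ^ 2 := by
    rw [hc, div_div, sq]
  rw [← this]
  exact hfinal
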